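/- Let c_t, c_r be real numbers and d_t, d_r complex numbers. Then the infimum of the set A = {c_t·β_t² + c_r·β_r² − 2β_t·Re(conj(d_t)·exp(i·φ_t)) − 2β_r·Re(conj(d_r)·exp(i·φ_r)) : β_t ∈ [0,1], β_r ∈ [0,1], β_t² + β_r² = 1, φ_t ∈ ℝ, φ_r ∈ ℝ} equals the infimum of the set B = {c_t·sin²ϑ + c_r·cos²ϑ − 2|d_t|·sin ϑ − 2|d_r|·cos ϑ : ϑ ∈ [0, π/2]}. -/

import Mathlib

lemma re_le_abs' (d : ℂ) (φ : ℝ) :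
    ((starRingEnd ℂ) d * Complex.exp (Complex.I * φ)).re ≤ ‖d‖ := by
  calc ((starRingEnd ℂ) d * Complex.exp (Complex.I * φ)).re
      ≤ ‖(starRingEnd ℂ) d * Complex.exp (Complex.I * φ)‖ := Complex.re_le_norm _
    _ = ‖d‖ := by
        rw [norm_mul, Complex.norm_conj, mul_comm Complex.I, Complex.norm_exp_ofReal_mul_I, mul_one]

lemma exists_phase (d : ℂ) :
    ∃ φ : ℝ, ((starRingEnd ℂ) d * Complex.exp (Complex.I * φ)).re = ‖d‖ := by
  refine ⟨Complex.arg d, ?_⟩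
  have h := Complex.norm_mul_exp_arg_mul_I d
  rw [mul_comm Complex.I]
  rcases eq_or_ne d 0 with rfl | hd
  · simp
  · have habs : (‖d‖ : ℂ) ≠ 0 := by
      exact_mod_cast norm_ne_zero_iff.mpr hd
    have he : Complex.exp (Complex.arg d * Complex.I) = d / ‖d‖ :=
      (eq_div_iff habs).2 (by rw [mul_comm]; exact h)
    rw [he]
    have hm : (starRingEnd ℂ) d * (d / ‖d‖) = (‖d‖ : ℂ) := by
      rw [mul_div_assoc', Complex.conj_mul', div_eq_iff habs]
      ring
    rw [hm]
    simp

theorem stmt_7 (ct cr : ℝ) (dt dr : ℂ) :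
    sInf {v : ℝ | ∃ βt βr φt φr : ℝ,
        βt ∈ Set.Icc (0 : ℝ) 1 ∧ βr ∈ Set.Icc (0 : ℝ) 1 ∧ βt ^ 2 + βr ^ 2 = 1 ∧
        v = ct * βt ^ 2 + cr * βr ^ 2
            - 2 * βt * ((starRingEnd ℂ) dt * Complex.exp (Complex.I * φt)).re
            - 2 * βr * ((starRingEnd ℂ) dr * Complex.exp (Complex.I * φr)).re}
    = sInf {v : ℝ | ∃ ϑ ∈ Set.Icc (0 : ℝ) (Real.pi / 2),
        v = ct * Real.sin ϑ ^ 2 + cr * Real.cos ϑ ^ 2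
            - 2 * ‖dt‖ * Real.sin ϑ - 2 * ‖dr‖ * Real.cos ϑ} := by
  set A := {v : ℝ | ∃ βt βr φt φr : ℝ,
        βt ∈ Set.Icc (0 : ℝ) 1 ∧ βr ∈ Set.Icc (0 : ℝ) 1 ∧ βt ^ 2 + βr ^ 2 = 1 ∧
        v = ct * βt ^ 2 + cr * βr ^ 2
            - 2 * βt * ((starRingEnd ℂ) dt * Complex.exp (Complex.I * φt)).re
            - 2 * βr * ((starRingEnd ℂ) dr * Complex.exp (Complex.I * φr)).re} with hA
  set B := {v : ℝ | ∃ ϑ ∈ Set.Icc (0 : ℝ) (Real.pi / 2),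
        v = ct * Real.sin ϑ ^ 2 + cr * Real.cos ϑ ^ 2
            - 2 * ‖dt‖ * Real.sin ϑ - 2 * ‖dr‖ * Real.cos ϑ} with hB
  -- B ⊆ A
  have hBA : B ⊆ A := by
    rintro v ⟨ϑ, ⟨h0, h2⟩, rfl⟩
    obtain ⟨φt, hφt⟩ := exists_phase dt
    obtain ⟨φr, hφr⟩ := exists_phase dr
    refine ⟨Real.sin ϑ, Real.cos ϑ, φt, φr, ⟨Real.sin_nonneg_of_nonneg_of_le_pi h0
      (h2.trans (by linarith [Real.pi_pos])), Real.sin_le_one _⟩,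
      ⟨Real.cos_nonneg_of_mem_Icc ⟨by linarith [Real.pi_pos], h2⟩, Real.cos_le_one _⟩,
      by rw [Real.sin_sq_add_cos_sq], ?_⟩
    rw [hφt, hφr]; ring
  -- every a ∈ A dominates some b ∈ B
  have hdom : ∀ a ∈ A, ∃ b ∈ B, b ≤ a := by
    rintro a ⟨βt, βr, φt, φr, ⟨ht0, ht1⟩, ⟨hr0, hr1⟩, hsum, rfl⟩
    refine ⟨ct * βt ^ 2 + cr * βr ^ 2 - 2 * ‖dt‖ * βt - 2 * ‖dr‖ * βr,
      ?_, ?_⟩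
    · refine ⟨Real.arcsin βt, ⟨Real.arcsin_nonneg.2 ht0, Real.arcsin_le_pi_div_two βt⟩, ?_⟩
      have hs : Real.sin (Real.arcsin βt) = βt := Real.sin_arcsin (by linarith) ht1
      have hc : Real.cos (Real.arcsin βt) = βr := by
        rw [Real.cos_arcsin]
        have : 1 - βt ^ 2 = βr ^ 2 := by linarith
        rw [this, Real.sqrt_sq hr0]
      rw [hs, hc]
    · have h1 := re_le_abs' dt φt
      have h2 := re_le_abs' dr φr
      nlinarith [norm_nonneg dt, norm_nonneg dr]
  -- nonempty and bddBelow
  have hBne : B.Nonempty := ⟨_, ⟨0, ⟨le_refl 0, by positivity⟩, rfl⟩⟩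
  have hAne : A.Nonempty := hBne.mono hBA
  have hbddA : BddBelow A := by
    refine ⟨-(|ct| + |cr| + 2 * ‖dt‖ + 2 * ‖dr‖), ?_⟩
    rintro a ⟨βt, βr, φt, φr, ⟨ht0, ht1⟩, ⟨hr0, hr1⟩, hsum, rfl⟩
    have h1 := re_le_abs' dt φt
    have h2 := re_le_abs' dr φr
    have hbt2 : βt ^ 2 ≤ 1 := by nlinarith
    have hbr2 : βr ^ 2 ≤ 1 := by nlinarith
    have hct : ct * βt ^ 2 ≥ -|ct| := by
      rcases abs_cases ct with ⟨h, _⟩ | ⟨h, _⟩ <;> nlinarith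
    have hcr : cr * βr ^ 2 ≥ -|cr| := by
      rcases abs_cases cr with ⟨h, _⟩ | ⟨h, _⟩ <;> nlinarith
    nlinarith [norm_nonneg dt, norm_nonneg dr]
  apply le_antisymm
  · exact csInf_le_csInf hbddA hBne hBA
  · refine le_csInf hAne ?_
    intro a ha
    obtain ⟨b, hb, hba⟩ := hdom a ha
    exact (csInf_le (hbddA.mono hBA) hb).trans hba
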